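/- Let T be a strongly connected tournament on n ≥ 2 vertices that contains an edge e = uv such that every directed cycle of T contains e. Then T is isomorphic to D_n with u corresponding to v_n and v to v_1; i.e., T − e is acyclic with topological order v, ..., u, and T is the transitive tournament plus the single back edge from the sink to the source. -/

import Mathlib

variable {V : Type*}

/-- A directed cycle in a digraph `D`, given as an injective map `Fin m → V`
(`m ≥ 2`) whose consecutive images (cyclically) are edges of `D`. -/
def IsCycleFun (D : V → V → Prop) {m : ℕ} (f : Fin m → V) : Prop :=
  2 ≤ m ∧ Function.Injective f ∧ ∀ i : Fin m, D (f i) (f (finRotate m i))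

/-- The set `S` contains a directed cycle of `D`. -/
def HasCycleIn (D : V → V → Prop) (S : Set V) : Prop :=
  ∃ (m : ℕ) (f : Fin m → V), IsCycleFun D f ∧ ∀ i, f i ∈ S

/-- Out-degree of a vertex. -/
noncomputable def outDeg (D : V → V → Prop) (v : V) : ℕ := Nat.card {u | D v u}

/-- In-degree of a vertex. -/
noncomputable def inDeg (D : V → V → Prop) (v : V) : ℕ := Nat.card {u | D u v}

/-- A coloring of the vertices of `D` with no monochromatic directed cycle. -/
def ProperColoring (D : V → V → Prop) {k : ℕ} (c : V → Fin k) : Prop :=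
  ∀ (m : ℕ) (f : Fin m → V), IsCycleFun D f → ∃ i j, c (f i) ≠ c (f j)

/-- The number of proper `k`-colorings of `D` (value of the dichromatic polynomial). -/
noncomputable def numColorings (V : Type*) (D : V → V → Prop) (k : ℕ) : ℕ :=
  Nat.card {c : V → Fin k // ProperColoring D c}

/-- The finset `S` carries a (Hamiltonian on `S`) directed cycle of `D`. -/
def IsCycleSet (D : V → V → Prop) (S : Finset V) : Prop :=
  2 ≤ S.card ∧ ∃ f : Fin S.card ≃ {x // x ∈ S},
    ∀ i, D (f i) (f (finRotate S.card i))

/-- The finset `S` induces exactly a directed cycle of `D`. -/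
def IsInducedCycleSet (D : V → V → Prop) (S : Finset V) : Prop :=
  2 ≤ S.card ∧ ∃ f : Fin S.card ≃ {x // x ∈ S},
    (∀ i, D (f i) (f (finRotate S.card i))) ∧
    ∀ a b : {x // x ∈ S}, D (a : V) b → ∃ i, f i = a ∧ f (finRotate S.card i) = b

/-- `D` has girth `g` : it has a directed cycle of length `g` and no shorter one. -/
def HasGirth (D : V → V → Prop) (g : ℕ) : Prop :=
  (∃ f : Fin g → V, IsCycleFun D f) ∧
    ∀ (m : ℕ) (f : Fin m → V), IsCycleFun D f → g ≤ m


/-- The tournament Dₙ (0-indexed on Fin n). -/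
def DnAdj (n : ℕ) (a b : Fin n) : Prop :=
  (a.1 < b.1 ∧ ¬ (a.1 = 0 ∧ b.1 = n - 1)) ∨ (a.1 = n - 1 ∧ b.1 = 0)

namespace Stmt19Aux

def Wk (D : V → V → Prop) (m : ℕ) (f : ℕ → V) : Prop := ∀ i, i < m → D (f i) (f (i+1))

theorem wk_of_rtg {D : V → V → Prop} {a b : V} (h : Relation.ReflTransGen D a b) :
    ∃ m f, f 0 = a ∧ f m = b ∧ Wk D m f := by
  induction h with
  | refl => exact ⟨0, fun _ => a, rfl, rfl, fun i hi => absurd hi (Nat.not_lt_zero i)⟩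
  | @tail b c hab hbc ih =>
    obtain ⟨m, f, h0, hm, hw⟩ := ih
    refine ⟨m+1, fun k => if k ≤ m then f k else c, by simp [h0], by simp, fun i hi => ?_⟩
    rcases Nat.lt_or_ge i m with h | h
    · have h1 : i ≤ m := by omega
      have h2 : i + 1 ≤ m := by omega
      simp only [if_pos h1, if_pos h2]
      exact hw i h
    · have h1 : i = m := by omega
      subst h1
      have h2 : ¬ (i + 1 ≤ i) := by omega
      simp only [if_pos le_rfl, if_neg h2, hm]
      exact hbc

open Classical in
theorem exists_min (P : ℕ → Prop) (h : ∃ m, P m) : ∃ m, P m ∧ ∀ k, P k → m ≤ k :=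
  ⟨Nat.find h, Nat.find_spec h, fun k hk => Nat.find_le hk⟩

theorem exists_path {D : V → V → Prop} {a b : V} (h : Relation.ReflTransGen D a b)
    (hab : a ≠ b) :
    ∃ m f, f 0 = a ∧ f m = b ∧ Wk D m f ∧ ∀ i j, i < j → j ≤ m → f i ≠ f j := by
  have h0 : ∃ m, ∃ f, f 0 = a ∧ f m = b ∧ Wk D m f := by
    obtain ⟨m, f, h⟩ := wk_of_rtg h; exact ⟨m, f, h⟩
  obtain ⟨m, ⟨f, hf0, hfm, hw⟩, hmin⟩ := exists_min _ h0
  refine ⟨m, f, hf0, hfm, hw, fun i j hij hjm heq => ?_⟩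
  have hm0 : m ≠ 0 := by
    intro h0'
    apply hab
    rw [← hf0, ← hfm, h0']
  set d := j - i with hd
  have hd1 : 1 ≤ d := by omega
  have hnew : ∃ g, g 0 = a ∧ g (m - d) = b ∧ Wk D (m - d) g := by
    refine ⟨fun k => if k ≤ i then f k else f (k + d), by simp [hf0], ?_, ?_⟩
    · by_cases hc : m - d ≤ i
      · have hji : j = m := by omega
        have hmi : m - d = i := by omega
        simp only [hmi, if_pos le_rfl]
        rw [heq, hji, hfm]
      · have hmd : m - d + d = m := by omega
        simp only [if_neg hc, hmd, hfm]
    · intro k hk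
      rcases lt_trichotomy k i with h1 | h1 | h1
      · have c1 : k ≤ i := le_of_lt h1
        have c2 : k + 1 ≤ i := h1
        simp only [if_pos c1, if_pos c2]
        exact hw k (by omega)
      · subst h1
        have c2 : ¬ (k + 1 ≤ k) := by omega
        simp only [if_pos le_rfl, if_neg c2, heq]
        have he : k + 1 + d = j + 1 := by omega
        rw [he]
        exact hw j (by omega)
      · have c1 : ¬ (k ≤ i) := by omega
        have c2 : ¬ (k + 1 ≤ i) := by omega
        simp only [if_neg c1, if_neg c2]
        have he : k + 1 + d = k + d + 1 := by omega
        rw [he]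
        exact hw (k + d) (by omega)
  obtain ⟨g, hg0, hgm, hgw⟩ := hnew
  have := hmin (m - d) ⟨g, hg0, hgm, hgw⟩
  omega

theorem cycle_of_closed_wk {D : V → V → Prop} (hirrD : ∀ x, ¬ D x x) {m : ℕ} {f : ℕ → V}
    (hm : 1 ≤ m) (hc : f 0 = f m) (hw : Wk D m f) :
    ∃ (k : ℕ) (g : Fin k → V), IsCycleFun D g := by
  have h0 : ∃ m, 1 ≤ m ∧ ∃ f : ℕ → V, f 0 = f m ∧ Wk D m f := ⟨m, hm, f, hc, hw⟩
  clear hm hc hw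
  obtain ⟨m', ⟨hm1, f, hc, hw⟩, hmin⟩ := exists_min _ h0
  clear h0
  have hinj : ∀ i j, i < j → j ≤ m' → ¬(i = 0 ∧ j = m') → f i ≠ f j := by
    intro i j hij hjm hne heq
    set d := j - i with hd
    have hd1 : 1 ≤ d := by omega
    have hdm : d < m' := by
      rcases Nat.eq_zero_or_pos i with h1 | h1
      · have : j ≠ m' := fun h => hne ⟨h1, h⟩
        omega
      · omega
    have hnew : ∃ g : ℕ → V, g 0 = g (m' - d) ∧ Wk D (m' - d) g := by
      refine ⟨fun k => if k ≤ i then f k else f (k + d), ?_, ?_⟩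
      · by_cases hcn : m' - d ≤ i
        · have hji : j = m' := by omega
          have hmi : m' - d = i := by omega
          show (if (0:ℕ) ≤ i then f 0 else f (0 + d)) =
            (if m' - d ≤ i then f (m' - d) else f (m' - d + d))
          rw [if_pos (Nat.zero_le i), if_pos hcn, hmi, heq, hji, hc]
        · have hmd : m' - d + d = m' := by omega
          show (if (0:ℕ) ≤ i then f 0 else f (0 + d)) =
            (if m' - d ≤ i then f (m' - d) else f (m' - d + d))
          rw [if_pos (Nat.zero_le i), if_neg hcn, hmd]
          exact hc
      · intro k hk
        rcases lt_trichotomy k i with h1 | h1 | h1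
        · have c1 : k ≤ i := le_of_lt h1
          have c2 : k + 1 ≤ i := h1
          simp only [if_pos c1, if_pos c2]
          exact hw k (by omega)
        · subst h1
          have c2 : ¬ (k + 1 ≤ k) := by omega
          simp only [if_pos le_rfl, if_neg c2, heq]
          have he : k + 1 + d = j + 1 := by omega
          rw [he]
          exact hw j (by omega)
        · have c1 : ¬ (k ≤ i) := by omega
          have c2 : ¬ (k + 1 ≤ i) := by omega
          simp only [if_neg c1, if_neg c2]
          have he : k + 1 + d = k + d + 1 := by omega
          rw [he]
          exact hw (k + d) (by omega)
    obtain ⟨g, hg0, hgw⟩ := hnew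
    have := hmin (m' - d) ⟨by omega, g, hg0, hgw⟩
    omega
  have hm2 : 2 ≤ m' := by
    by_contra hlt
    have hm1' : m' = 1 := by omega
    subst hm1'
    have h := hw 0 (by omega)
    simp only [Nat.zero_add] at h
    rw [← hc] at h
    exact hirrD _ h
  obtain ⟨k, rfl⟩ : ∃ k, m' = k + 1 := ⟨m' - 1, by omega⟩
  refine ⟨k + 1, fun i => f i.1, hm2, ?_, ?_⟩
  · intro i j hij
    by_contra hne
    have h1 : i.1 ≠ j.1 := fun h => hne (Fin.ext h)
    rcases Nat.lt_or_ge i.1 j.1 with h | h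
    · exact hinj i.1 j.1 h (by omega) (fun ⟨_, hj⟩ => by have := j.isLt; omega) hij
    · have h' : j.1 < i.1 := by omega
      exact hinj j.1 i.1 h' (by omega) (fun ⟨_, hj⟩ => by have := i.isLt; omega) hij.symm
  · intro i
    have hval : (finRotate (k+1) i).1 = (i.1 + 1) % (k+1) := by
      rw [finRotate_succ_apply, Fin.add_def]
      simp
    show D (f i.1) (f ((finRotate (k+1) i).1))
    rcases Nat.lt_or_ge (i.1 + 1) (k+1) with h | h
    · rw [hval, Nat.mod_eq_of_lt h]
      exact hw i.1 (by omega)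
    · have hi : i.1 = k := by have := i.isLt; omega
      have hz : (i.1 + 1) % (k+1) = 0 := by rw [hi]; simp
      rw [hval, hz, hc, hi]
      exact hw k (by omega)

end Stmt19Aux


open Stmt19Aux in
/-- A strongly connected tournament with an edge u→v lying on every directed cycle is
isomorphic to Dₙ, with u ↦ vₙ and v ↦ v₁. -/
theorem stmt_19 (n : ℕ) (hn : 2 ≤ n) (T : Fin n → Fin n → Prop)
    (hirr : ∀ a, ¬ T a a) (htour : ∀ a b : Fin n, a ≠ b → (T a b ↔ ¬ T b a))
    (hstrong : ∀ a b : Fin n, Relation.ReflTransGen T a b)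
    (u v : Fin n) (huv : T u v)
    (hall : ∀ (m : ℕ) (f : Fin m → Fin n), IsCycleFun T f →
      ∃ i : Fin m, f i = u ∧ f (finRotate m i) = v) :
    ∃ e : Fin n ≃ Fin n,
      (∀ a b : Fin n, T a b ↔ DnAdj n (e a) (e b)) ∧
      e u = ⟨n - 1, by omega⟩ ∧ e v = ⟨0, by omega⟩ := by
  classical
  have huv_ne : u ≠ v := fun h => hirr u (h ▸ huv)
  set T' : Fin n → Fin n → Prop := fun a b => T a b ∧ ¬(a = u ∧ b = v) with hT'
  -- no cycle in T'
  have hnoc : ∀ (m : ℕ) (f : Fin m → Fin n), ¬ IsCycleFun T' f := by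
    intro m f hf
    obtain ⟨hm, hinj, he⟩ := hf
    obtain ⟨i, h1, h2⟩ := hall m f ⟨hm, hinj, fun i => (he i).1⟩
    exact (he i).2 ⟨h1, h2⟩
  have hT'irr : ∀ x, ¬ T' x x := fun x h => hirr x h.1
  -- Claim A : the only out-neighbour of u is v
  have hA : ∀ x, T u x → x = v := by
    intro x hux
    by_contra hxv
    have hxu : x ≠ u := fun h => hirr u (h ▸ hux)
    obtain ⟨m, f, hf0, hfm, hw, hinj⟩ := exists_path (hstrong x u) hxu
    have hclosed : ∃ g : ℕ → Fin n, g 0 = g (m+1) ∧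
        ∀ i, i < m + 1 → T' (g i) (g (i+1)) := by
      refine ⟨fun k => if k = 0 then u else f (k-1), ?_, ?_⟩
      · show u = (if m + 1 = 0 then u else f (m+1-1))
        rw [if_neg (by omega : ¬ (m + 1 = 0))]
        simp [hfm]
      · intro i hi
        rcases Nat.eq_zero_or_pos i with h1 | h1
        · subst h1
          show T' (if 0 = 0 then u else f (0-1)) (if 0+1 = 0 then u else f (0+1-1))
          rw [if_pos rfl, if_neg (by omega : ¬ (0+1 = 0))]
          simp only [Nat.add_sub_cancel, hf0]
          exact ⟨hux, fun hp => hxv hp.2⟩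
        · show T' (if i = 0 then u else f (i-1)) (if i+1 = 0 then u else f (i+1-1))
          rw [if_neg (by omega : ¬ (i = 0)), if_neg (by omega : ¬ (i+1 = 0))]
          simp only [Nat.add_sub_cancel]
          have him : i - 1 < m := by omega
          have hstep := hw (i-1) him
          have hiw : i - 1 + 1 = i := by omega
          rw [hiw] at hstep
          refine ⟨hstep, fun hp => ?_⟩
          have : f (i-1) ≠ f m := hinj (i-1) m him le_rfl
          rw [hfm] at this
          exact this hp.1
    obtain ⟨g, hg0, hgw⟩ := hclosed
    obtain ⟨k, F, hF⟩ := cycle_of_closed_wk hT'irr (by omega : 1 ≤ m + 1) hg0 hgw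
    exact hnoc k F hF
  -- Claim B : the only in-neighbour of v is u
  have hB : ∀ x, T x v → x = u := by
    intro x hxv
    by_contra hxu
    have hxv' : x ≠ v := fun h => hirr v (h ▸ hxv)
    obtain ⟨m, f, hf0, hfm, hw, hinj⟩ := exists_path (hstrong v x) (Ne.symm hxv')
    have hclosed : ∃ g : ℕ → Fin n, g 0 = g (m+1) ∧
        ∀ i, i < m + 1 → T' (g i) (g (i+1)) := by
      refine ⟨fun k => if k ≤ m then f k else v, ?_, ?_⟩
      · show (if 0 ≤ m then f 0 else v) = (if m + 1 ≤ m then f (m+1) else v)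
        rw [if_pos (Nat.zero_le m), if_neg (by omega : ¬ (m + 1 ≤ m)), hf0]
      · intro i hi
        rcases Nat.lt_or_ge i m with h1 | h1
        · show T' (if i ≤ m then f i else v) (if i+1 ≤ m then f (i+1) else v)
          rw [if_pos (by omega : i ≤ m), if_pos (by omega : i + 1 ≤ m)]
          refine ⟨hw i h1, fun hp => ?_⟩
          have : f 0 ≠ f (i+1) := fun h => hinj 0 (i+1) (by omega) (by omega) h
          rw [hf0] at this
          exact this hp.2.symm
        · have h2 : i = m := by omega
          subst h2
          show T' (if i ≤ i then f i else v) (if i+1 ≤ i then f (i+1) else v)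
          rw [if_pos le_rfl, if_neg (by omega : ¬ (i+1 ≤ i)), hfm]
          exact ⟨hxv, fun hp => hxu hp.1⟩
    obtain ⟨g, hg0, hgw⟩ := hclosed
    obtain ⟨k, F, hF⟩ := cycle_of_closed_wk hT'irr (by omega : 1 ≤ m + 1) hg0 hgw
    exact hnoc k F hF
  -- no directed triangle in T'
  have h3 : ∀ a b c : Fin n, T' a b → T' b c → T' c a → False := by
    intro a b c hab hbc hca
    have hab' : a ≠ b := fun h => hirr a (h ▸ hab.1)
    have hbc' : b ≠ c := fun h => hirr b (h ▸ hbc.1)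
    have hca' : c ≠ a := fun h => hirr c (h ▸ hca.1)
    have hcyc : IsCycleFun T ![a, b, c] := by
      refine ⟨by omega, ?_, ?_⟩
      · intro i j hij
        fin_cases i <;> fin_cases j <;>
          first
            | rfl
            | exact absurd (show a = b from hij) hab'
            | exact absurd (show b = a from hij) (Ne.symm hab')
            | exact absurd (show b = c from hij) hbc'
            | exact absurd (show c = b from hij) (Ne.symm hbc')
            | exact absurd (show c = a from hij) hca'
            | exact absurd (show a = c from hij) (Ne.symm hca')
      · intro i
        fin_cases i
        · have e1 : finRotate 3 0 = 1 := by decide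
          show T (![a,b,c] 0) (![a,b,c] (finRotate 3 0))
          rw [e1]
          exact hab.1
        · have e1 : finRotate 3 1 = 2 := by decide
          show T (![a,b,c] 1) (![a,b,c] (finRotate 3 1))
          rw [e1]
          exact hbc.1
        · have e1 : finRotate 3 2 = 0 := by decide
          show T (![a,b,c] 2) (![a,b,c] (finRotate 3 2))
          rw [e1]
          exact hca.1
    obtain ⟨i, h1, h2⟩ := hall 3 ![a,b,c] hcyc
    fin_cases i
    · have e1 : finRotate 3 0 = 1 := by decide
      exact hab.2 ⟨show a = u from h1, show b = v from h2⟩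
    · have e1 : finRotate 3 1 = 2 := by decide
      exact hbc.2 ⟨show b = u from h1, show c = v from h2⟩
    · have e1 : finRotate 3 2 = 0 := by decide
      exact hca.2 ⟨show c = u from h1, show a = v from h2⟩
  -- the modified tournament T'' : flip the edge (u,v)
  set T'' : Fin n → Fin n → Prop := fun a b => T' a b ∨ (a = v ∧ b = u) with hT''
  have hirr'' : ∀ a, ¬ T'' a a := by
    rintro a (h | ⟨h1, h2⟩)
    · exact hirr a h.1
    · exact huv_ne (h2.symm.trans h1)
  have hasym : ∀ a b, T'' a b → T'' b a → False := by
    rintro a b (h | ⟨rfl, rfl⟩) (h' | ⟨h1', h2'⟩)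
    · have hne : a ≠ b := fun h0 => hirr a (h0 ▸ h.1)
      exact ((htour a b hne).1 h.1) h'.1
    · subst h1'; subst h2'
      exact h.2 ⟨rfl, rfl⟩
    · exact h'.2 ⟨rfl, rfl⟩
    · exact huv_ne (h1' ▸ h2')
  have htri : ∀ a b : Fin n, T'' a b ∨ a = b ∨ T'' b a := by
    intro a b
    by_cases hne : a = b
    · exact Or.inr (Or.inl hne)
    · by_cases hT : T a b
      · by_cases hp : a = u ∧ b = v
        · exact Or.inr (Or.inr (Or.inr ⟨hp.2, hp.1⟩))
        · exact Or.inl (Or.inl ⟨hT, hp⟩)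
      · have hT2 : T b a := by
          by_contra hT2
          exact hT (((htour a b hne).2) hT2)
        by_cases hp : b = u ∧ a = v
        · exact Or.inl (Or.inr ⟨hp.2, hp.1⟩)
        · exact Or.inr (Or.inr (Or.inl ⟨hT2, hp⟩))
  have htrans : ∀ a b c : Fin n, T'' a b → T'' b c → T'' a c := by
    rintro a b c (hab | ⟨rfl, rfl⟩) (hbc | ⟨h1, h2⟩)
    · -- T' a b, T' b c
      by_cases hac : a = c
      · subst hac
        exact (hasym a b (Or.inl hab) (Or.inl hbc)).elim
      · rcases htri a c with h | h | h
        · exact h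
        · exact absurd h hac
        · rcases h with hca | ⟨h1, h2⟩
          · exact (h3 a b c hab hbc hca).elim
          · -- c = v, a = u : T' u b with hA gives b = v
            subst h1; subst h2
            have hbv := hA b hab.1
            exact absurd ⟨rfl, hbv⟩ hab.2
    · -- T' a b, b = v, c = u
      subst h1; subst h2
      have hau := hB a hab.1
      exact absurd ⟨hau, rfl⟩ hab.2
    · -- a = v, b = u, T' u c
      have hcv := hA c hbc.1
      exact absurd ⟨rfl, hcv⟩ hbc.2
    · -- u = v
      exact absurd h1 huv_ne
  -- T'' is a strict total order; build the order isomorphism with Fin n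
  letI iTrans : IsTrans (Fin n) T'' := ⟨htrans⟩
  letI iIrr : IsIrrefl (Fin n) T'' := ⟨hirr''⟩
  letI iTri : IsTrichotomous (Fin n) T'' := ⟨fun a b h1 h2 => by rcases htri a b with h | h | h; exacts [absurd h h1, h, absurd h h2]⟩
  letI iSTO : IsStrictTotalOrder (Fin n) T'' := {}
  letI iDec : DecidableRel T'' := Classical.decRel _
  let L : LinearOrder (Fin n) := linearOrderOfSTO T''
  let iso := @monoEquivOfFin (Fin n) _ L n (Fintype.card_fin n)
  have key : ∀ p q : Fin n, p < q ↔ T'' (iso p) (iso q) := by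
    intro p q
    constructor
    · intro h
      have hpq : p ≠ q := fun e => Nat.lt_irrefl q.1 (e ▸ h)
      have hle : (iso p = iso q) ∨ T'' (iso p) (iso q) := iso.map_rel_iff.2 (Nat.le_of_lt h)
      rcases hle with heq | h'
      · exact absurd (iso.toEquiv.injective heq) hpq
      · exact h'
    · intro h
      rcases Nat.lt_trichotomy p.1 q.1 with h1 | h1 | h1
      · exact h1
      · have hpq : p = q := Fin.ext h1
        subst hpq
        exact absurd h (hirr'' _)
      · have hqp : q ≠ p := fun e => Nat.lt_irrefl p.1 (e ▸ h1)
        have hle : (iso q = iso p) ∨ T'' (iso q) (iso p) := iso.map_rel_iff.2 (Nat.le_of_lt h1)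
        rcases hle with heq | h'
        · exact absurd (iso.toEquiv.injective heq) hqp
        · exact (hasym _ _ h h').elim
  let E : Fin n ≃ Fin n := iso.toEquiv.symm
  have hisoE : ∀ x : Fin n, iso (E x) = x := fun x => iso.toEquiv.apply_symm_apply x
  have keyE : ∀ a b : Fin n, E a < E b ↔ T'' a b := by
    intro a b
    rw [key (E a) (E b), hisoE, hisoE]
  -- u is the maximum of T''
  have humax : ∀ x : Fin n, x ≠ u → T'' x u := by
    intro x hx
    rcases htri x u with h | h | h
    · exact h
    · exact absurd h hx
    · rcases h with h' | ⟨h1, h2⟩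
      · have := hA x h'.1
        exact absurd ⟨rfl, this⟩ h'.2
      · exact absurd h1 huv_ne
  have hvmin : ∀ x : Fin n, x ≠ v → T'' v x := by
    intro x hx
    rcases htri v x with h | h | h
    · exact h
    · exact absurd h.symm hx
    · rcases h with h' | ⟨h1, h2⟩
      · have := hB x h'.1
        exact absurd ⟨this, rfl⟩ h'.2
      · exact absurd h2 (fun h0 => huv_ne h0.symm)
  have hEu : E u = ⟨n - 1, by omega⟩ := by
    have hle : ∀ y : Fin n, y ≤ E u := by
      intro y
      by_cases hy : iso y = u
      · have : y = E u := iso.toEquiv.eq_symm_apply.mpr hy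
        exact Nat.le_of_eq (congrArg Fin.val this)
      · exact Nat.le_of_lt ((key y (E u)).2 (by rw [hisoE]; exact humax _ hy))
    have h1 := hle ⟨n - 1, by omega⟩
    have h2 : (E u).1 ≤ n - 1 := by have := (E u).isLt; omega
    exact Fin.ext (by exact Nat.le_antisymm h2 h1)
  have hEv : E v = ⟨0, by omega⟩ := by
    have hle : ∀ y : Fin n, E v ≤ y := by
      intro y
      by_cases hy : iso y = v
      · have : y = E v := iso.toEquiv.eq_symm_apply.mpr hy
        exact Nat.le_of_eq (congrArg Fin.val this).symm
      · exact Nat.le_of_lt ((key (E v) y).2 (by rw [hisoE]; exact hvmin _ hy))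
    exact Fin.ext (Nat.le_antisymm (hle ⟨0, by omega⟩) (Nat.zero_le _))
  refine ⟨E, ?_, hEu, hEv⟩
  intro a b
  constructor
  · intro hab
    have hne : a ≠ b := fun h => hirr a (h ▸ hab)
    by_cases hp : a = u ∧ b = v
    · refine Or.inr ⟨?_, ?_⟩
      · rw [hp.1, hEu]
      · rw [hp.2, hEv]
    · have h'' : T'' a b := Or.inl ⟨hab, hp⟩
      have hlt : E a < E b := (keyE a b).2 h''
      refine Or.inl ⟨hlt, ?_⟩
      rintro ⟨h1, h2⟩
      have hav : a = v := by
        apply E.injective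
        rw [hEv]; exact Fin.ext h1
      have hbu : b = u := by
        apply E.injective
        rw [hEu]; exact Fin.ext h2
      rw [hav, hbu] at hab
      exact ((htour u v huv_ne).1 huv) hab
  · intro hD
    simp only [DnAdj] at hD
    rcases hD with ⟨hlt, hne0⟩ | ⟨h1, h2⟩
    · have h'' : T'' a b := (keyE a b).1 (by exact hlt)
      rcases h'' with h | ⟨rfl, rfl⟩
      · exact h.1
      · exfalso
        apply hne0
        constructor
        · rw [hEv]
        · rw [hEu]
    · have hau : a = u := by
        apply E.injective
        rw [hEu]; exact Fin.ext h1
      have hbv : b = v := by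
        apply E.injective
        rw [hEv]; exact Fin.ext h2
      subst hau; subst hbv
      exact huv
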